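/- Let V ⊆ ℤ^d be finite and symmetric with respect to the origin, h > 0, and v defined at x and x ± h e for e ∈ V. If the Lebesgue measure of ∂_V v(x) = {p : p · (h e) ≥ v(x) − v(x − h e) ∀ e ∈ V} is positive, then Δ_{h e} v(x) = v(x+he) − 2v(x) + v(x−he) > 0 for every e ∈ V. -/

import Mathlib

open scoped RealInnerProductSpace
open MeasureTheory

/-- Embedding of integer vectors into Euclidean space. -/
noncomputable def embZ {d : ℕ} (e : Fin d → ℤ) : EuclideanSpace ℝ (Fin d) :=
  WithLp.toLp 2 (fun i => (e i : ℝ))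

/-- The discrete subdifferential `∂_V v(x)`. -/
def discreteSubdiff {d : ℕ} (V : Finset (Fin d → ℤ)) (h : ℝ)
    (v : EuclideanSpace ℝ (Fin d) → ℝ) (x : EuclideanSpace ℝ (Fin d)) :
    Set (EuclideanSpace ℝ (Fin d)) :=
  {p | ∀ e ∈ V, v x - v (x - h • embZ e) ≤ ⟪p, h • embZ e⟫}

lemma embZ_neg {d : ℕ} (e : Fin d → ℤ) : embZ (-e) = -embZ e := by
  ext i; simp [embZ]

lemma hyperplane_volume_zero {d : ℕ} (a : EuclideanSpace ℝ (Fin d)) (ha : a ≠ 0) (c : ℝ) :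
    volume {p : EuclideanSpace ℝ (Fin d) | ⟪p, a⟫ = c} = 0 := by
  have ha2 : (0:ℝ) < ⟪a, a⟫ := lt_of_le_of_ne real_inner_self_nonneg (Ne.symm (inner_self_ne_zero.mpr ha))
  set f : EuclideanSpace ℝ (Fin d) →ₗ[ℝ] ℝ :=
    { toFun := fun p => ⟪p, a⟫
      map_add' := fun p q => inner_add_left _ _ _
      map_smul' := fun r p => real_inner_smul_left _ _ _ }
  have : {p : EuclideanSpace ℝ (Fin d) | ⟪p, a⟫ = c}
      = (AffineSubspace.comap (f.toAffineMap) (AffineSubspace.mk' c ⊥) : Set _) := by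
    ext p
    simp [AffineSubspace.mem_comap, AffineSubspace.mem_mk', sub_eq_zero, f]
  rw [this]
  refine Measure.addHaar_affineSubspace volume _ ?_
  intro htop
  have hmem : ((c + 1) / ⟪a, a⟫) • a ∈
      AffineSubspace.comap (f.toAffineMap) (AffineSubspace.mk' c ⊥) := by
    rw [htop]; trivial
  rw [AffineSubspace.mem_comap, AffineSubspace.mem_mk'] at hmem
  simp only [LinearMap.coe_toAffineMap, vsub_eq_sub, Submodule.mem_bot, sub_eq_zero] at hmem
  have : ((c + 1) / ⟪a, a⟫) * ⟪a, a⟫ = c := by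
    simpa [f, real_inner_smul_left] using hmem
  rw [div_mul_cancel₀ _ (ne_of_gt ha2)] at this
  linarith

/-- If the discrete subdifferential has positive Lebesgue measure then all second
differences are strictly positive. -/
theorem second_diff_pos_of_subdiff_pos_measure {d : ℕ}
    (V : Finset (Fin d → ℤ)) (h0 : (0 : Fin d → ℤ) ∉ V)
    (hsym : ∀ e ∈ V, -e ∈ V)
    (h : ℝ) (hh : 0 < h)
    (v : EuclideanSpace ℝ (Fin d) → ℝ) (x : EuclideanSpace ℝ (Fin d))
    (hpos : 0 < volume (discreteSubdiff V h v x)) :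
    ∀ e ∈ V, 0 < v (x + h • embZ e) - 2 * v x + v (x - h • embZ e) := by
  intro e he
  by_contra hle
  push_neg at hle
  -- a = h • embZ e is nonzero
  have hene : e ≠ 0 := fun hc => h0 (hc ▸ he)
  have hane : embZ e ≠ 0 := by
    intro hc
    apply hene
    funext i
    have := congrArg (fun y => y i) hc
    simpa [embZ] using this
  have ha : h • embZ e ≠ 0 := smul_ne_zero (ne_of_gt hh) hane
  set a := h • embZ e with hadef
  have hsub : discreteSubdiff V h v x ⊆ {p : EuclideanSpace ℝ (Fin d) | ⟪p, a⟫ = v x - v (x - a)} := by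
    intro p hp
    have h1 : v x - v (x - a) ≤ ⟪p, a⟫ := hp e he
    have h2 : v x - v (x + a) ≤ ⟪p, -a⟫ := by
      have := hp (-e) (hsym e he)
      simpa [embZ_neg, sub_neg_eq_add, hadef, smul_neg] using this
    rw [inner_neg_right] at h2
    have : ⟪p, a⟫ ≤ v (x + a) - v x := by linarith
    have : ⟪p, a⟫ ≤ v x - v (x - a) := by linarith
    exact le_antisymm this h1
  have := measure_mono_null hsub (hyperplane_volume_zero a ha _)
  rw [this] at hpos
  exact lt_irrefl 0 hpos
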